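/- Let n and k be nonnegative integers with n ≥ k+1, and let G = K_{n+k+3} + ((k+2)K₃ ∪ K₂) be the join of the complete graph on n+k+3 vertices with the disjoint union of k+2 triangles K₃ and a single edge K₂. Then G is (n+k+3)-connected and its isolated toughness satisfies I(G) = (3(k+3)+n−1)/(k+3). -/

import Mathlib

open SimpleGraph

variable {α β : Type*}

/-- The graph obtained from `G` by deleting the vertices in `S` (an induced subgraph
on the complement of `S`). -/
def SimpleGraph.delVerts (G : SimpleGraph α) (S : Set α) : SimpleGraph ↥(Sᶜ) :=
  G.induce Sᶜ

/-- The number of isolated vertices of a graph. -/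
noncomputable def isoCount (H : SimpleGraph α) : ℕ :=
  Nat.card {v : α // ∀ w, ¬ H.Adj v w}

/-- The number of connected components of a graph. -/
noncomputable def compCount (H : SimpleGraph α) : ℕ :=
  Nat.card H.ConnectedComponent

/-- A graph is `m`-connected if it has more than `m` vertices and stays connected
after deleting any fewer than `m` vertices. -/
def IsMConnected (G : SimpleGraph α) (m : ℕ) : Prop :=
  m < Nat.card α ∧ ∀ S : Set α, S.ncard < m → (G.delVerts S).Connected

/-- `G` has a spanning subgraph each of whose components is `K₂` or a cycle of length ≥ 3. -/
def HasK2CycleFactor (G : SimpleGraph α) : Prop :=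
  ∃ F : SimpleGraph α, F ≤ G ∧ ∀ c : F.ConnectedComponent,
    Nonempty ((F.induce c.supp) ≃g (⊤ : SimpleGraph (Fin 2))) ∨
    ∃ m : ℕ, 3 ≤ m ∧ Nonempty ((F.induce c.supp) ≃g cycleGraph m)

/-- `G` has a spanning subgraph each of whose components is `K₂` or an odd cycle of length ≥ 5. -/
def HasK2OddCycleFactor (G : SimpleGraph α) : Prop :=
  ∃ F : SimpleGraph α, F ≤ G ∧ ∀ c : F.ConnectedComponent,
    Nonempty ((F.induce c.supp) ≃g (⊤ : SimpleGraph (Fin 2))) ∨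
    ∃ m : ℕ, 5 ≤ m ∧ Odd m ∧ Nonempty ((F.induce c.supp) ≃g cycleGraph m)

/-- `B` is (the vertex set of) a block of `H`: a maximal set inducing a connected
subgraph with no cut vertex. -/
def IsBlock (H : SimpleGraph α) (B : Set α) : Prop :=
  ((H.induce B).Connected ∧ ∀ v ∈ B, B = {v} ∨ (H.induce (B \ {v})).Connected) ∧
  ∀ C : Set α, B ⊆ C →
    ((H.induce C).Connected ∧ ∀ v ∈ C, C = {v} ∨ (H.induce (C \ {v})).Connected) → B = C

/-- A triangular cactus: a connected graph each of whose blocks is a triangle;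
by convention the one-vertex graph `K₁` is also a triangular cactus. -/
def IsTriangularCactus (H : SimpleGraph α) : Prop :=
  H.Connected ∧ ((∃ v : α, ∀ w : α, w = v) ∨
    ∀ B : Set α, IsBlock H B → Nonempty ((H.induce B) ≃g (⊤ : SimpleGraph (Fin 3))))

/-- The number of connected components of `H` that are triangular cacti. -/
noncomputable def ctcCount (H : SimpleGraph α) : ℕ :=
  Nat.card {c : H.ConnectedComponent // IsTriangularCactus (H.induce c.supp)}

/-- The join of two graphs: their disjoint union together with all edges between them. -/
def SimpleGraph.join (G₁ : SimpleGraph α) (G₂ : SimpleGraph β) : SimpleGraph (α ⊕ β) where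
  Adj u v := match u, v with
    | Sum.inl a, Sum.inl b => G₁.Adj a b
    | Sum.inr a, Sum.inr b => G₂.Adj a b
    | Sum.inl _, Sum.inr _ => True
    | Sum.inr _, Sum.inl _ => True
  symm := ⟨fun u v => match u, v with
    | Sum.inl _, Sum.inl _ => fun h => G₁.adj_symm h
    | Sum.inr _, Sum.inr _ => fun h => G₂.adj_symm h
    | Sum.inl _, Sum.inr _ => fun _ => trivial
    | Sum.inr _, Sum.inl _ => fun _ => trivial⟩
  loopless := ⟨fun u => by cases u <;> simp⟩

/-- `G` is a `({K₂, C}, n)`-factor critical avoidable graph. -/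
def K2CycleFactorCriticalAvoidable (G : SimpleGraph α) (n : ℕ) : Prop :=
  ∀ W : Set α, W.ncard = n → ∀ u v : α, u ∉ W → v ∉ W → G.Adj u v →
    HasK2CycleFactor ((G.deleteEdges {s(u, v)}).delVerts W)

/-- `G` is a `({K₂, C_{2i+1} | i ≥ 2}, n)`-factor critical avoidable graph. -/
def K2OddCycleFactorCriticalAvoidable (G : SimpleGraph α) (n : ℕ) : Prop :=
  ∀ W : Set α, W.ncard = n → ∀ u v : α, u ∉ W → v ∉ W → G.Adj u v →
    HasK2OddCycleFactor ((G.deleteEdges {s(u, v)}).delVerts W)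

/-- The disjoint union of `m` triangles `K₃`. -/
def trianglesGraph (m : ℕ) : SimpleGraph (Fin m × Fin 3) where
  Adj p q := p.1 = q.1 ∧ p.2 ≠ q.2
  symm := ⟨fun _ _ h => ⟨h.1.symm, fun hh => h.2 hh.symm⟩⟩
  loopless := ⟨fun _ h => h.2 rfl⟩

/-- The graph `K_{n+k+3} + ((k+2)K₁ ∪ K₂)`. -/
def exampleGraph1 (n k : ℕ) :
    SimpleGraph (Fin (n + k + 3) ⊕ (Fin (k + 2) ⊕ Fin 2)) :=
  (⊤ : SimpleGraph (Fin (n + k + 3))).join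
    ((⊥ : SimpleGraph (Fin (k + 2))) ⊕g (⊤ : SimpleGraph (Fin 2)))

/-- The graph `K_{n+k+3} + ((k+2)K₃ ∪ K₂)`. -/
def exampleGraph2 (n k : ℕ) :
    SimpleGraph (Fin (n + k + 3) ⊕ ((Fin (k + 2) × Fin 3) ⊕ Fin 2)) :=
  (⊤ : SimpleGraph (Fin (n + k + 3))).join
    (trianglesGraph (k + 2) ⊕g (⊤ : SimpleGraph (Fin 2)))

/-- The graph `K_{n+k+2} + ((k+1)K₁ ∪ K₂)`. -/
def exampleGraph3 (n k : ℕ) :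
    SimpleGraph (Fin (n + k + 2) ⊕ (Fin (k + 1) ⊕ Fin 2)) :=
  (⊤ : SimpleGraph (Fin (n + k + 2))).join
    ((⊥ : SimpleGraph (Fin (k + 1))) ⊕g (⊤ : SimpleGraph (Fin 2)))


section Statement15Aux

open Sum

/-- A vertex `v` is isolated after deleting `S`: it survives and has no surviving neighbor. -/
private def IsIso {α : Type*} (G : SimpleGraph α) (S : Set α) (v : α) : Prop :=
  v ∉ S ∧ ∀ w, w ∉ S → ¬ G.Adj v w

private lemma isoCount_delVerts {α : Type*} (G : SimpleGraph α) (S : Set α) :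
    isoCount (G.delVerts S) = Nat.card {v : α // IsIso G S v} :=
  Nat.card_congr
    { toFun := fun x => ⟨x.1.1, x.1.2, fun w hw hadj => x.2 ⟨w, hw⟩ hadj⟩
      invFun := fun x => ⟨⟨x.1, x.2.1⟩, fun w hadj => x.2.2 w.1 w.2 hadj⟩
      left_inv := fun _ => rfl
      right_inv := fun _ => rfl }

private lemma eg2_adj_of_inl (n k : ℕ) (a : Fin (n + k + 3))
    (v : Fin (n + k + 3) ⊕ ((Fin (k + 2) × Fin 3) ⊕ Fin 2)) (h : v ≠ Sum.inl a) :
    (exampleGraph2 n k).Adj (Sum.inl a) v := by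
  cases v with
  | inl b =>
    show a ≠ b
    exact fun hab => h (by rw [hab])
  | inr x => trivial

/-- The "slot" of a vertex of `(k+2)K₃ ∪ K₂`: its triangle, or the `K₂`. -/
private def slot2 (k : ℕ) : (Fin (k + 2) × Fin 3) ⊕ Fin 2 → Fin (k + 2) ⊕ Unit :=
  fun w => w.elim (fun p => Sum.inl p.1) (fun _ => Sum.inr ())

private lemma eg2_adj_slot (n k : ℕ) {w w' : (Fin (k + 2) × Fin 3) ⊕ Fin 2}
    (hne : w ≠ w') (hs : slot2 k w = slot2 k w') :
    (exampleGraph2 n k).Adj (Sum.inr w) (Sum.inr w') := by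
  show (trianglesGraph (k + 2) ⊕g (⊤ : SimpleGraph (Fin 2))).Adj w w'
  cases w with
  | inl p =>
    cases w' with
    | inl q =>
      have h1 : p.1 = q.1 := by simpa [slot2] using hs
      have h2 : p.2 ≠ q.2 := fun h2 => hne (by
        apply congrArg Sum.inl; exact Prod.ext h1 h2)
      exact ⟨h1, h2⟩
    | inr b => simp [slot2] at hs
  | inr a =>
    cases w' with
    | inl q => simp [slot2] at hs
    | inr b =>
      show a ≠ b
      exact fun h => hne (by rw [h])

private lemma eg2_adj_inr_iff (n k : ℕ) (x y : (Fin (k + 2) × Fin 3) ⊕ Fin 2) :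
    (exampleGraph2 n k).Adj (Sum.inr x) (Sum.inr y) ↔
      (trianglesGraph (k + 2) ⊕g (⊤ : SimpleGraph (Fin 2))).Adj x y := Iff.rfl

open Classical in
/-- The companions of `w` : the other vertices of its slot. -/
private noncomputable def comp2 (k : ℕ) (w : (Fin (k + 2) × Fin 3) ⊕ Fin 2) :
    Finset ((Fin (k + 2) × Fin 3) ⊕ Fin 2) :=
  Finset.univ.filter (fun w' => w' ≠ w ∧ slot2 k w' = slot2 k w)

private lemma comp2_card_inl (k : ℕ) (p : Fin (k + 2) × Fin 3) :
    (comp2 k (Sum.inl p)).card = 2 := by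
  classical
  have hinj : Function.Injective (fun j : Fin 3 => (Sum.inl (p.1, j) :
      (Fin (k + 2) × Fin 3) ⊕ Fin 2)) := by
    intro a b h
    simpa [Prod.ext_iff] using h
  have : comp2 k (Sum.inl p) = ({p.2}ᶜ : Finset (Fin 3)).map ⟨_, hinj⟩ := by
    ext w'
    cases w' with
    | inl q =>
      rw [comp2, Finset.mem_filter]
      simp only [comp2, Finset.mem_filter, Finset.mem_univ, true_and, Finset.mem_map,
        Finset.mem_compl, Finset.mem_singleton, Function.Embedding.coeFn_mk, slot2]
      constructor
      · rintro ⟨hne, hs⟩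
        simp only [Sum.elim_inl, Sum.inl.injEq] at hs
        refine ⟨q.2, fun h => hne ?_, ?_⟩
        · exact congrArg Sum.inl (Prod.ext hs h)
        · exact congrArg Sum.inl (Prod.ext hs.symm rfl)
      · rintro ⟨j, hj, hq⟩
        obtain ⟨h1, h2⟩ : p.1 = q.1 ∧ j = q.2 := by
          simpa [Prod.ext_iff] using hq
        refine ⟨fun h => hj ?_, by simp [h1]⟩
        have : q = p := by simpa using h
        rw [h2, this]
    | inr b =>
      rw [comp2, Finset.mem_filter]
      simp [comp2, slot2]
  rw [this, Finset.card_map, Finset.card_compl, Finset.card_singleton, Fintype.card_fin]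

private lemma comp2_card_inr (k : ℕ) (a : Fin 2) :
    (comp2 k (Sum.inr a)).card = 1 := by
  classical
  have hinj : Function.Injective (fun b : Fin 2 => (Sum.inr b :
      (Fin (k + 2) × Fin 3) ⊕ Fin 2)) := fun a b h => by simpa using h
  have : comp2 k (Sum.inr a) = ({a}ᶜ : Finset (Fin 2)).map ⟨_, hinj⟩ := by
    ext w'
    cases w' with
    | inl q =>
      rw [comp2, Finset.mem_filter]
      simp [comp2, slot2]
    | inr b =>
      rw [comp2, Finset.mem_filter]
      simp only [comp2, Finset.mem_filter, Finset.mem_univ, true_and, Finset.mem_map,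
        Finset.mem_compl, Finset.mem_singleton, Function.Embedding.coeFn_mk, slot2]
      constructor
      · rintro ⟨hne, -⟩
        exact ⟨b, fun h => hne (by rw [h]), rfl⟩
      · rintro ⟨j, hj, hq⟩
        obtain rfl : j = b := by simpa using hq
        exact ⟨fun h => hj (by simpa using h), by simp⟩
  rw [this, Finset.card_map, Finset.card_compl, Finset.card_singleton, Fintype.card_fin]

end Statement15Aux

/-- For `n ≥ k+1`, the graph `G = K_{n+k+3} + ((k+2)K₃ ∪ K₂)` is
`(n+k+3)`-connected and its isolated toughness equals `(3(k+3)+n−1)/(k+3)`. -/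
theorem statement15 (n k : ℕ) (hnk : k + 1 ≤ n) :
    IsMConnected (exampleGraph2 n k) (n + k + 3) ∧
    (∀ S : Set (Fin (n + k + 3) ⊕ ((Fin (k + 2) × Fin 3) ⊕ Fin 2)),
      2 ≤ isoCount ((exampleGraph2 n k).delVerts S) →
      (3 * ((k : ℝ) + 3) + (n : ℝ) - 1) / ((k : ℝ) + 3) ≤
        (S.ncard : ℝ) / (isoCount ((exampleGraph2 n k).delVerts S) : ℝ)) ∧
    (∃ S : Set (Fin (n + k + 3) ⊕ ((Fin (k + 2) × Fin 3) ⊕ Fin 2)),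
      2 ≤ isoCount ((exampleGraph2 n k).delVerts S) ∧
      (S.ncard : ℝ) / (isoCount ((exampleGraph2 n k).delVerts S) : ℝ) =
        (3 * ((k : ℝ) + 3) + (n : ℝ) - 1) / ((k : ℝ) + 3)) := by
  classical
  have hV : Nat.card (Fin (n + k + 3) ⊕ ((Fin (k + 2) × Fin 3) ⊕ Fin 2)) =
      n + 4 * k + 11 := by
    simp only [Nat.card_eq_fintype_card, Fintype.card_sum, Fintype.card_prod, Fintype.card_fin]
    ring
  refine ⟨⟨by omega, ?_⟩, ?_, ?_⟩
  · -- connectivity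
    intro S hS
    have hhub : ∃ a : Fin (n + k + 3), Sum.inl a ∉ S := by
      by_contra h
      push_neg at h
      have hsub : Set.range (Sum.inl : Fin (n + k + 3) →
          Fin (n + k + 3) ⊕ ((Fin (k + 2) × Fin 3) ⊕ Fin 2)) ⊆ S := by
        rintro _ ⟨a, rfl⟩; exact h a
      have h1 := Set.ncard_le_ncard hsub (Set.toFinite S)
      have h2 : (Set.range (Sum.inl : Fin (n + k + 3) →
          Fin (n + k + 3) ⊕ ((Fin (k + 2) × Fin 3) ⊕ Fin 2))).ncard = n + k + 3 := by
        rw [← Nat.card_coe_set_eq, Nat.card_range_of_injective Sum.inl_injective,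
          Nat.card_eq_fintype_card, Fintype.card_fin]
      omega
    obtain ⟨a, ha⟩ := hhub
    have hmem : Sum.inl a ∈ Sᶜ := ha
    have hreach : ∀ u : ↥(Sᶜ),
        ((exampleGraph2 n k).delVerts S).Reachable u ⟨Sum.inl a, hmem⟩ := by
      intro u
      by_cases hu : u = ⟨Sum.inl a, hmem⟩
      · exact hu ▸ SimpleGraph.Reachable.refl _
      · refine SimpleGraph.Adj.reachable ?_
        have hne : u.1 ≠ Sum.inl a := fun h => hu (Subtype.ext h)
        exact (eg2_adj_of_inl n k a u.1 hne).symm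
    exact (SimpleGraph.connected_iff_exists_forall_reachable _).mpr
      ⟨⟨Sum.inl a, hmem⟩, fun w => (hreach w).symm⟩
  · -- lower bound on the ratio
    intro S hcount
    rw [isoCount_delVerts] at hcount ⊢
    have hnt : Nontrivial {v // IsIso (exampleGraph2 n k) S v} :=
      Finite.one_lt_card_iff_nontrivial.mp (by omega)
    obtain ⟨⟨v₁, h₁⟩, ⟨v₂, h₂⟩, hv12⟩ := hnt
    have hv12' : v₁ ≠ v₂ := fun h => hv12 (Subtype.ext h)
    have hhub : ∀ a : Fin (n + k + 3), Sum.inl a ∈ S := by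
      intro a; by_contra ha
      have key : ∀ v, IsIso (exampleGraph2 n k) S v → v = Sum.inl a := by
        intro v hv
        by_contra hne
        exact hv.2 (Sum.inl a) ha (eg2_adj_of_inl n k a v hne).symm
      exact hv12' ((key v₁ h₁).trans (key v₂ h₂).symm)
    haveI hempty : IsEmpty {a : Fin (n + k + 3) // IsIso (exampleGraph2 n k) S (Sum.inl a)} :=
      ⟨fun x => x.2.1 (hhub x.1)⟩
    set IsoW : Finset ((Fin (k + 2) × Fin 3) ⊕ Fin 2) :=
      Finset.univ.filter (fun w => IsIso (exampleGraph2 n k) S (Sum.inr w)) with hIsoW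
    have hcardP : Nat.card {v // IsIso (exampleGraph2 n k) S v} = IsoW.card := by
      rw [Nat.card_congr (Equiv.subtypeSum), Nat.card_sum, Nat.card_of_isEmpty,
        Nat.card_eq_fintype_card, Fintype.card_subtype, zero_add]
    rw [hcardP] at hcount ⊢
    -- injectivity of the slot function on isolated vertices
    have hisoW : ∀ w ∈ IsoW, IsIso (exampleGraph2 n k) S (Sum.inr w) := by
      intro w hw; exact (Finset.mem_filter.mp hw).2
    have hinj : ∀ w ∈ IsoW, ∀ w' ∈ IsoW, slot2 k w = slot2 k w' → w = w' := by
      intro w hw w' hw' hs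
      by_contra hne
      exact (hisoW w hw).2 (Sum.inr w') (hisoW w' hw').1 (eg2_adj_slot n k hne hs)
    have hile : IsoW.card ≤ k + 3 := by
      have h := Finset.card_le_card_of_injOn (slot2 k)
        (fun x _ => Finset.mem_univ (slot2 k x))
        (fun x hx y hy h => hinj x (Finset.mem_coe.mp hx) y (Finset.mem_coe.mp hy) h)
      simpa [Fintype.card_sum] using h
    -- companions
    have hdisj : ∀ w₁ ∈ IsoW, ∀ w₂ ∈ IsoW, w₁ ≠ w₂ →
        Disjoint (comp2 k w₁) (comp2 k w₂) := by
      intro w₁ hw1 w₂ hw2 hne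
      rw [Finset.disjoint_left]
      intro a ha1 ha2
      have e1 := (Finset.mem_filter.mp ha1).2.2
      have e2 := (Finset.mem_filter.mp ha2).2.2
      exact hne (hinj w₁ hw1 w₂ hw2 (e1.symm.trans e2))
    have hcompS : ∀ w ∈ IsoW, ∀ w' ∈ comp2 k w, Sum.inr w' ∈ S := by
      intro w hw w' hw'
      by_contra hns
      obtain ⟨hne, hs⟩ := (Finset.mem_filter.mp hw').2
      exact (hisoW w hw).2 (Sum.inr w') hns (eg2_adj_slot n k (Ne.symm hne) hs.symm)
    set T : Finset (Fin (n + k + 3) ⊕ ((Fin (k + 2) × Fin 3) ⊕ Fin 2)) :=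
      (Finset.univ.map ⟨Sum.inl, Sum.inl_injective⟩) ∪
        ((IsoW.biUnion (comp2 k)).map ⟨Sum.inr, Sum.inr_injective⟩) with hT
    have hTsub : ↑T ⊆ S := by
      intro v hv
      simp only [hT, Finset.coe_union, Set.mem_union, Finset.mem_coe, Finset.mem_map,
        Finset.mem_biUnion, Function.Embedding.coeFn_mk] at hv
      rcases hv with ⟨a, -, rfl⟩ | ⟨w', ⟨w, hw, hw'⟩, rfl⟩
      exacts [hhub a, hcompS w hw w' hw']
    have hTcard : T.card = (n + k + 3) + ∑ w ∈ IsoW, (comp2 k w).card := by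
      have hd2 : Disjoint
          (Finset.univ.map (⟨Sum.inl, Sum.inl_injective⟩ : Fin (n + k + 3) ↪
            Fin (n + k + 3) ⊕ ((Fin (k + 2) × Fin 3) ⊕ Fin 2)))
          ((IsoW.biUnion (comp2 k)).map ⟨Sum.inr, Sum.inr_injective⟩) := by
        rw [Finset.disjoint_left]
        rintro v hv1 hv2
        simp only [Finset.mem_map, Function.Embedding.coeFn_mk] at hv1 hv2
        obtain ⟨a, -, rfl⟩ := hv1
        obtain ⟨w, -, hw⟩ := hv2
        exact Sum.inr_ne_inl hw
      rw [hT, Finset.card_union_of_disjoint hd2, Finset.card_map, Finset.card_map,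
        Finset.card_univ, Fintype.card_fin, Finset.card_biUnion hdisj]
    -- bound the companion sum
    have hB1 : (IsoW.filter (fun w => ¬ w.isLeft)).card ≤ 1 := by
      rw [Finset.card_le_one]
      intro x hx y hy
      obtain ⟨hx1, hx2⟩ := Finset.mem_filter.mp hx
      obtain ⟨hy1, hy2⟩ := Finset.mem_filter.mp hy
      apply hinj x hx1 y hy1
      cases x with
      | inl p => simp at hx2
      | inr a =>
        cases y with
        | inl q => simp at hy2
        | inr b => rfl
    have hAB : (IsoW.filter (fun w => w.isLeft)).card +
        (IsoW.filter (fun w => ¬ w.isLeft)).card = IsoW.card :=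
      Finset.card_filter_add_card_filter_not _
    have e1 : ∑ w ∈ IsoW.filter (fun w => w.isLeft), (comp2 k w).card =
        (IsoW.filter (fun w => w.isLeft)).card * 2 := by
      refine Finset.sum_const_nat fun w hw => ?_
      obtain ⟨-, hleft⟩ := Finset.mem_filter.mp hw
      cases w with
      | inl p => exact comp2_card_inl k p
      | inr b => simp at hleft
    have e2 : ∑ w ∈ IsoW.filter (fun w => ¬ w.isLeft), (comp2 k w).card =
        (IsoW.filter (fun w => ¬ w.isLeft)).card * 1 := by
      refine Finset.sum_const_nat fun w hw => ?_
      obtain ⟨-, hright⟩ := Finset.mem_filter.mp hw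
      cases w with
      | inl p => simp at hright
      | inr b => exact comp2_card_inr k b
    have hsum : 2 * IsoW.card ≤ (∑ w ∈ IsoW, (comp2 k w).card) + 1 := by
      have := Finset.sum_filter_add_sum_filter_not IsoW (fun w => w.isLeft)
        (fun w => (comp2 k w).card)
      omega
    have hST : T.card ≤ S.ncard := by
      have h := Set.ncard_le_ncard hTsub (Set.toFinite S)
      rwa [Set.ncard_coe_finset] at h
    -- the arithmetic
    have hi0 : (0:ℝ) < (IsoW.card : ℝ) := by
      have : 0 < IsoW.card := by omega
      exact_mod_cast this
    rw [div_le_div_iff₀ (by positivity) hi0]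
    have f0 : ((n:ℝ) + k + 3) + (∑ w ∈ IsoW, (comp2 k w).card : ℕ) ≤ (S.ncard : ℝ) := by
      have : (n + k + 3) + ∑ w ∈ IsoW, (comp2 k w).card ≤ S.ncard := by omega
      exact_mod_cast this
    have f2 : 2 * (IsoW.card : ℝ) ≤ ((∑ w ∈ IsoW, (comp2 k w).card : ℕ) : ℝ) + 1 := by
      exact_mod_cast hsum
    have f3 : (IsoW.card : ℝ) ≤ (k : ℝ) + 3 := by exact_mod_cast hile
    have f1' : (n : ℝ) + k + 2 + 2 * (IsoW.card : ℝ) ≤ (S.ncard : ℝ) := by linarith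
    have h5 : ((n : ℝ) + k + 2) * (IsoW.card : ℝ) ≤ ((n : ℝ) + k + 2) * ((k : ℝ) + 3) :=
      mul_le_mul_of_nonneg_left f3 (by positivity)
    have h7 : ((n : ℝ) + k + 2 + 2 * (IsoW.card : ℝ)) * ((k : ℝ) + 3) ≤
        (S.ncard : ℝ) * ((k : ℝ) + 3) :=
      mul_le_mul_of_nonneg_right f1' (by positivity)
    nlinarith [h5, h7]
  · -- the extremal set
    set f : Fin (k + 2) ⊕ Unit → Fin (n + k + 3) ⊕ ((Fin (k + 2) × Fin 3) ⊕ Fin 2) :=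
      fun x => x.elim (fun t => Sum.inr (Sum.inl (t, 0))) (fun _ => Sum.inr (Sum.inr 0)) with hf
    have hfinj : Function.Injective f := by
      rintro (t₁ | u₁) (t₂ | u₂) h
      · have ht : t₁ = t₂ := by simpa [hf, Prod.ext_iff] using h
        rw [ht]
      · simp [hf] at h
      · simp [hf] at h
      · exact congrArg Sum.inr (Subsingleton.elim _ _)
    refine ⟨(Set.range f)ᶜ, ?_⟩
    have hiso : ∀ v : ↥(((Set.range f)ᶜ)ᶜ), ∀ w,
        ¬ ((exampleGraph2 n k).delVerts (Set.range f)ᶜ).Adj v w := by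
      rintro ⟨v, hv⟩ ⟨w, hw⟩ hadj
      rw [compl_compl] at hv hw
      obtain ⟨x, rfl⟩ := hv
      obtain ⟨y, rfl⟩ := hw
      have hGadj : (exampleGraph2 n k).Adj (f x) (f y) := hadj
      rw [hf] at hGadj
      rcases x with t₁ | u₁ <;> rcases y with t₂ | u₂ <;>
        simp only [Sum.elim_inl, Sum.elim_inr] at hGadj
      · rw [eg2_adj_inr_iff] at hGadj
        exact (show (t₁, (0 : Fin 3)).1 = (t₂, (0 : Fin 3)).1 ∧ (t₁, (0 : Fin 3)).2 ≠ (t₂, (0 : Fin 3)).2 from hGadj).2 rfl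
      · rw [eg2_adj_inr_iff] at hGadj
        simp at hGadj
      · rw [eg2_adj_inr_iff] at hGadj
        simp at hGadj
      · rw [eg2_adj_inr_iff] at hGadj
        exact hGadj rfl
    have hcount : isoCount ((exampleGraph2 n k).delVerts (Set.range f)ᶜ) = k + 3 := by
      unfold isoCount
      rw [Nat.card_congr (Equiv.subtypeUnivEquiv hiso)]
      rw [compl_compl, Nat.card_range_of_injective hfinj]
      simp [Nat.card_eq_fintype_card]
    have hbig := Set.ncard_add_ncard_compl (Set.range f)
    have hrange : (Set.range f).ncard = k + 3 := by
      rw [← Nat.card_coe_set_eq, Nat.card_range_of_injective hfinj]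
      simp [Nat.card_eq_fintype_card]
    have hS0 : ((Set.range f)ᶜ).ncard = n + 3 * k + 8 := by omega
    refine ⟨by rw [hcount]; omega, ?_⟩
    rw [hcount, hS0]
    rw [div_eq_div_iff (by positivity) (by positivity)]
    push_cast
    ring
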